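/- Let E be a real normed vector space, let a₁, a₂, b₁, b₂ ∈ E and r₁, r₂, s₁, s₂ ≥ 0. Then the Minkowski sum of the two tuples convexHull(closedBall(a₁, r₁) ∪ closedBall(a₂, r₂)) + convexHull(closedBall(b₁, s₁) ∪ closedBall(b₂, s₂)) equals convexHull(⋃_{i,j ∈ {1,2}} closedBall(aᵢ + bⱼ, rᵢ + sⱼ)), the convex hull of the four closed balls centered at the pairwise sums of centers with radii the pairwise sums of radii. -/

import Mathlib

open Pointwise

open Metric

theorem myball {E : Type*} [NormedAddCommGroup E] [NormedSpace ℝ E]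
    {r s : ℝ} (hr : 0 ≤ r) (hs : 0 ≤ s) (a b : E) :
    closedBall a r + closedBall b s = closedBall (a + b) (r + s) := by
  ext x
  constructor
  · rintro ⟨u, hu, v, hv, rfl⟩
    simp only [mem_closedBall, dist_eq_norm] at *
    calc ‖u + v - (a + b)‖ = ‖(u - a) + (v - b)‖ := by rw [add_sub_add_comm]
      _ ≤ ‖u - a‖ + ‖v - b‖ := norm_add_le _ _
      _ ≤ r + s := add_le_add hu hv
  · intro hx
    simp only [mem_closedBall, dist_eq_norm] at hx
    rcases eq_or_lt_of_le (add_nonneg hr hs) with h | h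
    · refine ⟨a, by simp [hr], b, by simp [hs], ?_⟩
      have : ‖x - (a + b)‖ = 0 := le_antisymm (h ▸ hx) (norm_nonneg _)
      rw [sub_eq_zero.mp (norm_eq_zero.mp this)]
    · refine ⟨a + (r / (r + s)) • (x - (a + b)), ?_, b + (s / (r + s)) • (x - (a + b)), ?_, ?_⟩
      · simp only [mem_closedBall, dist_eq_norm, add_sub_cancel_left, norm_smul,
          Real.norm_eq_abs, abs_div, abs_of_nonneg hr, abs_of_nonneg (add_nonneg hr hs)]
        rw [div_mul_eq_mul_div, div_le_iff₀ h]
        nlinarith [norm_nonneg (x - (a+b))]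
      · simp only [mem_closedBall, dist_eq_norm, add_sub_cancel_left, norm_smul,
          Real.norm_eq_abs, abs_div, abs_of_nonneg hs, abs_of_nonneg (add_nonneg hr hs)]
        rw [div_mul_eq_mul_div, div_le_iff₀ h]
        nlinarith [norm_nonneg (x - (a+b))]
      · show a + (r / (r + s)) • (x - (a + b)) + (b + (s / (r + s)) • (x - (a + b))) = x
        rw [add_add_add_comm, ← add_smul, ← add_div, div_self h.ne', one_smul]
        abel


/-- The Minkowski sum of two tuples is the convex hull of the four closed balls
centered at the pairwise sums of centers with the pairwise sums of radii. -/
theorem minkowski_sum_of_tuples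
    {E : Type*} [NormedAddCommGroup E] [NormedSpace ℝ E]
    (a₁ a₂ b₁ b₂ : E) (r₁ r₂ s₁ s₂ : ℝ)
    (hr₁ : 0 ≤ r₁) (hr₂ : 0 ≤ r₂) (hs₁ : 0 ≤ s₁) (hs₂ : 0 ≤ s₂) :
    convexHull ℝ (closedBall a₁ r₁ ∪ closedBall a₂ r₂) +
      convexHull ℝ (closedBall b₁ s₁ ∪ closedBall b₂ s₂) =
      convexHull ℝ
        (closedBall (a₁ + b₁) (r₁ + s₁) ∪ closedBall (a₁ + b₂) (r₁ + s₂) ∪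
          closedBall (a₂ + b₁) (r₂ + s₁) ∪ closedBall (a₂ + b₂) (r₂ + s₂)) := by
  rw [← convexHull_add, Set.union_add, Set.add_union, Set.add_union,
    myball hr₁ hs₁, myball hr₁ hs₂, myball hr₂ hs₁, myball hr₂ hs₂]
  ac_rfl
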